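/- (Remez criterion) Let V ∈ ℂ^{n×r}, a ∈ ℂ^n, û ∈ ℂ^r, and let E = {i_1,…,i_t} be the set of indices attaining the maximal residual magnitude for û. Then Vû is a best sup-norm approximation to a if and only if there exist δ_k ≥ 0 for k ∈ E, not all zero, such that Σ_{k ∈ E} δ_k · conj(a_k − ⟨û, v^k⟩) · v^k_j = 0 for every j = 1,…,r. -/

import Mathlib

set_option maxHeartbeats 1000000

open Finset Complex

lemma relin {r : ℕ} (f : (Fin r → ℂ) →L[ℝ] ℝ) :
    ∃ c : Fin r → ℂ, ∀ z : Fin r → ℂ, (∑ j, z j * c j).re = f z := by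
  refine ⟨fun j => ⟨f (Pi.single j 1), -f (Pi.single j Complex.I)⟩, fun z => ?_⟩
  have hz : z = ∑ j, ((z j).re • (Pi.single j 1 : Fin r → ℂ)
      + (z j).im • (Pi.single j Complex.I : Fin r → ℂ)) := by
    funext k
    simp only [Finset.sum_apply, Pi.add_apply, Pi.smul_apply, Pi.single_apply,
      smul_ite, smul_zero, Finset.sum_add_distrib, Finset.sum_ite_eq,
      Finset.mem_univ, if_true]
    rw [Complex.real_smul, Complex.real_smul]
    simp only [mul_one, Complex.ofReal_mul]
    exact (Complex.re_add_im _).symm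
  conv_rhs => rw [hz]
  rw [map_sum, Complex.re_sum]
  refine Finset.sum_congr rfl fun j _ => ?_
  rw [map_add, map_smul, map_smul]
  simp [Complex.mul_re]

/-- Remez criterion: `Vû` is a best sup-norm approximation iff there are nonnegative,
not-all-zero `δ_k` supported on the extremal set `E` with
`Σ_{k∈E} δ_k conj(a_k − ⟨û,v^k⟩) v^k_j = 0` for all `j`. -/
theorem stmt_13 (n r : ℕ) (hn : 0 < n) (V : Matrix (Fin n) (Fin r) ℂ) (a : Fin n → ℂ)
    (uhat : Fin r → ℂ) :
    (∀ u : Fin r → ℂ, ‖a - V.mulVec uhat‖ ≤ ‖a - V.mulVec u‖) ↔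
    ∃ δ : Fin n → ℝ, (∀ k, 0 ≤ δ k) ∧
      (∀ k, ‖a k - ∑ i, uhat i * V k i‖ ≠ ‖a - V.mulVec uhat‖ → δ k = 0) ∧
      δ ≠ 0 ∧
      ∀ j, ∑ k, (δ k : ℂ) * (starRingEnd ℂ) (a k - ∑ i, uhat i * V k i) * V k j = 0 := by
  classical
  set M : ℝ := ‖a - V.mulVec uhat‖ with hMdef
  set e : Fin n → ℂ := fun k => a k - ∑ i, uhat i * V k i with he
  have hmul : ∀ (v : Fin r → ℂ) k, V.mulVec v k = ∑ i, v i * V k i := by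
    intro v k; simp [Matrix.mulVec, dotProduct, mul_comm]
  have hres : ∀ k, (a - V.mulVec uhat) k = e k := by
    intro k; simp [he, hmul]
  have habs_le : ∀ k, ‖e k‖ ≤ M := by
    intro k
    have h := norm_le_pi_norm (a - V.mulVec uhat) k
    rwa [hres] at h
  have hM0 : 0 ≤ M := norm_nonneg _
  constructor
  · intro h
    rcases hM0.eq_or_lt with hMeq | hMpos
    · -- M = 0 : every index is extremal, take all weights 1
      have hzero : a - V.mulVec uhat = 0 := norm_eq_zero.mp hMeq.symm
      have hek : ∀ k, e k = 0 := fun k => by rw [← hres k, hzero]; rfl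
      refine ⟨fun _ => 1, fun _ => zero_le_one, fun k hk => absurd ?_ hk, ?_, fun j => ?_⟩
      · show ‖e k‖ = M
        rw [hek k, ← hMeq]
        simp
      · intro h0; exact one_ne_zero (congrFun h0 ⟨0, hn⟩)
      · show ∑ k, ((1:ℝ) : ℂ) * (starRingEnd ℂ) (e k) * V k j = 0
        simp [hek]
    · -- M > 0
      obtain ⟨k0, -, hk0max⟩ := Finset.exists_max_image (univ : Finset (Fin n))
        (fun k => ‖e k‖) ⟨⟨0, hn⟩, Finset.mem_univ _⟩
      have hk0 : ‖e k0‖ = M := by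
        refine le_antisymm (habs_le k0) ?_
        rw [hMdef]
        refine (pi_norm_le_iff_of_nonneg (norm_nonneg _)).mpr fun i => ?_
        rw [hres i]
        exact hk0max i (Finset.mem_univ i)
      have hι : Nonempty {k : Fin n // ‖e k‖ = M} := ⟨⟨k0, hk0⟩⟩
      set w : {k : Fin n // ‖e k‖ = M} → (Fin r → ℂ) :=
        fun k j => (starRingEnd ℂ) (e k.1) * V k.1 j with hw
      set φ : ({k : Fin n // ‖e k‖ = M} → ℝ) →ₗ[ℝ] (Fin r → ℂ) :=
        { toFun := fun d => ∑ k, d k • w k,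
          map_add' := by intro x y; simp [add_smul, Finset.sum_add_distrib],
          map_smul' := by intro c x; simp [Finset.smul_sum, mul_smul] } with hφ
      have hconv : Convex ℝ (φ '' stdSimplex ℝ _) := (convex_stdSimplex ℝ _).linear_image φ
      have hclosed : IsClosed (φ '' stdSimplex ℝ _) :=
        ((isCompact_stdSimplex ℝ _).image φ.continuous_of_finiteDimensional).isClosed
      have h0mem : (0 : Fin r → ℂ) ∈ φ '' stdSimplex ℝ {k : Fin n // ‖e k‖ = M} := by
        by_contra h0
        obtain ⟨f, u0, hf0, hfs⟩ := geometric_hahn_banach_point_closed hconv hclosed h0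
        have hu0 : 0 < u0 := by simpa using hf0
        obtain ⟨c, hc⟩ := relin f
        set g : Fin n → ℂ := fun k => ∑ i, V k i * c i with hg
        have hR : ∀ k : {k : Fin n // ‖e k‖ = M},
            u0 < ((starRingEnd ℂ) (e k.1) * g k.1).re := by
          intro k
          have hv : w k ∈ φ '' stdSimplex ℝ _ := by
            refine ⟨fun k' => if k' = k then 1 else 0,
              ⟨fun k' => by dsimp only; split <;> norm_num, by simp⟩, ?_⟩
            simp [hφ, ite_smul]
          have h1 := hfs _ hv
          rw [← hc (w k)] at h1
          have h2 : ∑ j, w k j * c j = (starRingEnd ℂ) (e k.1) * g k.1 := by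
            rw [hg]
            dsimp only
            rw [Finset.mul_sum]
            exact Finset.sum_congr rfl fun j _ => by rw [hw]; ring
          rwa [h2] at h1
        set tk : Fin n → ℝ := fun k =>
          if ‖e k‖ = M then u0 / (Complex.normSq (g k) + 1)
          else (M - ‖e k‖) / (‖g k‖ + 1) with htk
        have htkpos : ∀ k, 0 < tk k := by
          intro k
          by_cases hk : ‖e k‖ = M
          · have h4 : tk k = u0 / (Complex.normSq (g k) + 1) := if_pos hk
            rw [h4]
            exact div_pos hu0 (add_pos_of_nonneg_of_pos (Complex.normSq_nonneg _) one_pos)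
          · have h4 : tk k = (M - ‖e k‖) / (‖g k‖ + 1) := if_neg hk
            rw [h4]
            exact div_pos (sub_pos.mpr (lt_of_le_of_ne (habs_le k) hk))
              (add_pos_of_nonneg_of_pos (norm_nonneg _) one_pos)
        have hune : (Finset.univ : Finset (Fin n)).Nonempty := ⟨⟨0, hn⟩, Finset.mem_univ _⟩
        set t : ℝ := Finset.univ.inf' hune tk with ht
        have htpos : 0 < t := (Finset.lt_inf'_iff hune).mpr fun k _ => htkpos k
        have htle : ∀ k, t ≤ tk k := fun k => Finset.inf'_le _ (Finset.mem_univ k)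
        set u' : Fin r → ℂ := fun i => uhat i + (t : ℂ) * c i with hu'
        have hres' : ∀ k, (a - V.mulVec u') k = e k - (t : ℂ) * g k := by
          intro k
          have h1 : V.mulVec u' k = V.mulVec uhat k + (t : ℂ) * g k := by
            rw [hmul, hmul, hg]
            dsimp only
            rw [Finset.mul_sum, ← Finset.sum_add_distrib]
            exact Finset.sum_congr rfl fun i _ => by rw [hu']; ring
          have h2 : (a - V.mulVec u') k = a k - V.mulVec u' k := rfl
          rw [h2, h1, ← hres k]
          show a k - (V.mulVec uhat k + (t:ℂ) * g k) = a k - V.mulVec uhat k - (t:ℂ) * g k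
          ring
        have hlt : ∀ k, ‖e k - (t : ℂ) * g k‖ < M := by
          intro k
          by_cases hk : ‖e k‖ = M
          · have hRk := hR ⟨k, hk⟩
            have htk' : t ≤ u0 / (Complex.normSq (g k) + 1) :=
              le_trans (htle k) (le_of_eq (if_pos hk))
            have h3 : t * (Complex.normSq (g k) + 1) ≤ u0 :=
              (le_div_iff₀ (add_pos_of_nonneg_of_pos (Complex.normSq_nonneg _) one_pos)).mp htk'
            have expand : Complex.normSq (e k - (t : ℂ) * g k)
                = Complex.normSq (e k) - 2 * t * ((starRingEnd ℂ) (e k) * g k).re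
                  + t ^ 2 * Complex.normSq (g k) := by
              simp only [Complex.normSq_apply, Complex.sub_re, Complex.sub_im,
                Complex.mul_re, Complex.mul_im, Complex.ofReal_re, Complex.ofReal_im,
                Complex.conj_re, Complex.conj_im]
              ring
            have hnsq : Complex.normSq (e k) = M ^ 2 := by
              rw [← Complex.sq_norm, hk]
            have hkey : Complex.normSq (e k - (t : ℂ) * g k) < M ^ 2 := by
              rw [expand, hnsq]
              nlinarith [mul_pos htpos (lt_trans hu0 hRk), Complex.normSq_nonneg (g k),
                mul_le_mul_of_nonneg_left h3 htpos.le]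
            have hs := Real.sqrt_lt_sqrt (Complex.normSq_nonneg _) hkey
            rwa [Real.sqrt_sq hM0, ← Complex.norm_def] at hs
          · have hlt0 : ‖e k‖ < M := lt_of_le_of_ne (habs_le k) hk
            have htk' : t ≤ (M - ‖e k‖) / (‖g k‖ + 1) :=
              le_trans (htle k) (le_of_eq (if_neg hk))
            have h3 : t * (‖g k‖ + 1) ≤ M - ‖e k‖ :=
              (le_div_iff₀ (add_pos_of_nonneg_of_pos (norm_nonneg _) one_pos)).mp htk'
            have htri : ‖e k - (t : ℂ) * g k‖
                ≤ ‖e k‖ + t * ‖g k‖ := by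
              calc ‖e k - (t : ℂ) * g k‖ ≤ ‖e k‖ + ‖(t : ℂ) * g k‖ := norm_sub_le _ _
                _ = ‖e k‖ + t * ‖g k‖ := by
                    rw [norm_mul, Complex.norm_real, Real.norm_eq_abs,
                      _root_.abs_of_nonneg htpos.le]
            have : ‖e k‖ + t * ‖g k‖ < M := by nlinarith
            exact lt_of_le_of_lt htri this
        have hcontra : ‖a - V.mulVec u'‖ < M := by
          refine (pi_norm_lt_iff hMpos).mpr fun k => ?_
          rw [hres' k]
          exact hlt k
        exact absurd (h u') (not_le.mpr hcontra)
      obtain ⟨d, hdmem, hdeq⟩ := h0mem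
      refine ⟨fun k => if hk : ‖e k‖ = M then d ⟨k, hk⟩ else 0, fun k => ?_, fun k hk => ?_, ?_, fun j => ?_⟩
      · show (0:ℝ) ≤ if hk : ‖e k‖ = M then d ⟨k, hk⟩ else 0
        split
        · exact hdmem.1 _
        · exact le_refl 0
      · exact dif_neg hk
      · intro h0
        have hd0 : ∀ k : {k : Fin n // ‖e k‖ = M}, d k = 0 := by
          intro k
          have h1 := congrFun h0 k.1
          rw [dif_pos k.2] at h1
          simpa using h1
        have := hdmem.2
        rw [Finset.sum_congr rfl fun k _ => hd0 k] at this
        simp at this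
      · have h1 := congrFun hdeq j
        simp only [hφ, LinearMap.coe_mk, AddHom.coe_mk, Finset.sum_apply,
          Pi.smul_apply, Pi.zero_apply] at h1
        have h2 : ∑ k : {k : Fin n // ‖e k‖ = M},
            (d k : ℂ) * (starRingEnd ℂ) (e k.1) * V k.1 j = 0 := by
          rw [← h1]
          refine Finset.sum_congr rfl fun k _ => ?_
          rw [hw]
          dsimp only
          rw [Complex.real_smul]
          ring
        show ∑ k, ((if hk : ‖e k‖ = M then d ⟨k, hk⟩ else 0 : ℝ) : ℂ)
            * (starRingEnd ℂ) (e k) * V k j = 0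
        rw [← h2]
        rw [← Finset.sum_filter_of_ne (p := fun k => ‖e k‖ = M)
          (f := fun k => ((if hk : ‖e k‖ = M then d ⟨k, hk⟩ else 0 : ℝ) : ℂ)
            * (starRingEnd ℂ) (e k) * V k j) ?_]
        · rw [Finset.sum_subtype (p := fun k => ‖e k‖ = M)
            (univ.filter fun k => ‖e k‖ = M) (fun k => by simp) _]
          refine Finset.sum_congr rfl fun k _ => ?_
          rw [dif_pos k.2]
        · intro x _ hx
          by_contra hp
          apply hx
          show ((if hk : ‖e x‖ = M then d ⟨x, hk⟩ else 0 : ℝ) : ℂ)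
            * (starRingEnd ℂ) (e x) * V x j = 0
          rw [dif_neg hp]
          simp
  · rintro ⟨δ, hδ0, hδsupp, hδne, hδsum⟩ u
    have swap : ∀ v : Fin r → ℂ,
        ∑ k, (δ k : ℂ) * (starRingEnd ℂ) (e k) * (V.mulVec v) k
          = ∑ j, v j * ∑ k, (δ k : ℂ) * (starRingEnd ℂ) (e k) * V k j := by
      intro v
      simp only [Matrix.mulVec, dotProduct, Finset.mul_sum]
      rw [Finset.sum_comm]
      refine Finset.sum_congr rfl fun j _ => Finset.sum_congr rfl fun k _ => by ring
    have hzero : ∀ v : Fin r → ℂ,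
        ∑ k, (δ k : ℂ) * (starRingEnd ℂ) (e k) * (V.mulVec v) k = 0 := by
      intro v; rw [swap]; exact Finset.sum_eq_zero fun j _ => by rw [show (∑ k, (δ k : ℂ) * (starRingEnd ℂ) (e k) * V k j) = 0 from hδsum j, mul_zero]
    have key : ∑ k, (δ k : ℂ) * (starRingEnd ℂ) (e k) * e k
        = ∑ k, (δ k : ℂ) * (starRingEnd ℂ) (e k) * (a k - V.mulVec u k) := by
      have h1 : ∀ v : Fin r → ℂ,
          ∑ k, (δ k : ℂ) * (starRingEnd ℂ) (e k) * (a k - V.mulVec v k)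
            = ∑ k, (δ k : ℂ) * (starRingEnd ℂ) (e k) * a k := by
        intro v
        simp only [mul_sub, Finset.sum_sub_distrib, hzero, sub_zero]
      calc ∑ k, (δ k : ℂ) * (starRingEnd ℂ) (e k) * e k
          = ∑ k, (δ k : ℂ) * (starRingEnd ℂ) (e k) * (a k - V.mulVec uhat k) := by
            refine Finset.sum_congr rfl fun k _ => ?_
            rw [← hres k]; rfl
        _ = ∑ k, (δ k : ℂ) * (starRingEnd ℂ) (e k) * a k := h1 uhat
        _ = ∑ k, (δ k : ℂ) * (starRingEnd ℂ) (e k) * (a k - V.mulVec u k) := (h1 u).symm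
    set S : ℝ := ∑ k, δ k with hS
    have hSpos : 0 < S := by
      obtain ⟨k0, hk0⟩ := Function.ne_iff.mp hδne
      exact Finset.sum_pos' (fun k _ => hδ0 k)
        ⟨k0, Finset.mem_univ _, lt_of_le_of_ne (hδ0 k0) (Ne.symm hk0)⟩
    have hLHS : ∑ k, (δ k : ℂ) * (starRingEnd ℂ) (e k) * e k = ((S * M^2 : ℝ) : ℂ) := by
      have hterm : ∀ k, (δ k : ℂ) * (starRingEnd ℂ) (e k) * e k = ((δ k * M^2 : ℝ) : ℂ) := by
        intro k
        by_cases hk : δ k = 0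
        · simp [hk]
        · have hek : ‖e k‖ = M := by
            by_contra hne; exact hk (hδsupp k hne)
          rw [mul_assoc, Complex.conj_mul', hek]
          push_cast
          ring
      rw [Finset.sum_congr rfl fun k _ => hterm k]
      have : (S * M^2 : ℝ) = ∑ k, δ k * M^2 := by rw [hS, Finset.sum_mul]
      rw [this]
      push_cast
      rfl
    set N : ℝ := ‖a - V.mulVec u‖ with hN
    have hN0 : 0 ≤ N := norm_nonneg _
    have hNk : ∀ k, ‖a k - V.mulVec u k‖ ≤ N := by
      intro k
      have h := norm_le_pi_norm (a - V.mulVec u) k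
      exact h
    have hbound : S * M^2 ≤ S * (M * N) := by
      calc S * M^2 = ‖((S * M^2 : ℝ) : ℂ)‖ := by
            rw [Complex.norm_real, Real.norm_eq_abs, _root_.abs_of_nonneg (by positivity)]
        _ = ‖∑ k, (δ k : ℂ) * (starRingEnd ℂ) (e k) * (a k - V.mulVec u k)‖ := by
            rw [← hLHS, ← key]
        _ ≤ ∑ k, ‖(δ k : ℂ) * (starRingEnd ℂ) (e k) * (a k - V.mulVec u k)‖ :=
            norm_sum_le _ _
        _ ≤ ∑ k, δ k * (M * N) := by
            refine Finset.sum_le_sum fun k _ => ?_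
            rw [norm_mul, norm_mul, Complex.norm_real, Real.norm_eq_abs, Complex.norm_conj,
              _root_.abs_of_nonneg (hδ0 k), mul_assoc]
            exact mul_le_mul_of_nonneg_left
              (mul_le_mul (habs_le k) (hNk k) (norm_nonneg _) hM0) (hδ0 k)
        _ = S * (M * N) := by rw [hS, Finset.sum_mul]
    rcases hM0.eq_or_lt with hM | hM
    · exact hM ▸ hN0
    · have h1 : S * M * M ≤ S * M * N := by
        calc S * M * M = S * M^2 := by ring
          _ ≤ S * (M * N) := hbound
          _ = S * M * N := by ring
      exact le_of_mul_le_mul_left h1 (by positivity)
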